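/- Let D : [0,∞) → (0,1] be a discount function (continuous, strictly decreasing, D(0)=1, D(t) → 0) and let u : X → ℝ be continuous and strictly increasing with u(0) = 0, on an interval X ⊆ ℝ₊ containing 0. Then the preference induced by U(x,t) = D(t)u(x) satisfies: [(x,t) ≼ (y,s) implies (x,t+σ) ≼ (y,s+σ) for all x,y ∈ X, σ > 0, 0 ≤ t < s] if and only if ln D is convex on [0,∞). -/

import Mathlib

open Real Set

/-- A continuous midpoint-convex function on `[0,∞)` is convex. -/
lemma convexOn_of_midpoint_aux (f : ℝ → ℝ) (hf : ContinuousOn f (Ici 0))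
    (hmid : ∀ p ∈ Ici (0:ℝ), ∀ q ∈ Ici (0:ℝ), f ((p + q) / 2) ≤ (f p + f q) / 2) :
    ConvexOn ℝ (Ici 0) f := by
  refine ⟨convex_Ici 0, ?_⟩
  intro a ha b hb wa wb hwa hwb hab
  simp only [smul_eq_mul]
  have hwb' : wb = 1 - wa := by linarith
  subst hwb'
  obtain ⟨g, hg⟩ : ∃ g : ℝ → ℝ,
      g = fun μ => f (μ * a + (1 - μ) * b) - (μ * f a + (1 - μ) * f b) := ⟨_, rfl⟩
  have hmem : ∀ μ ∈ Icc (0:ℝ) 1, μ * a + (1 - μ) * b ∈ Ici (0:ℝ) := by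
    intro μ hμ
    have ha' : (0:ℝ) ≤ a := ha
    have hb' : (0:ℝ) ≤ b := hb
    have := hμ.1; have := hμ.2
    have h1 : 0 ≤ μ * a := mul_nonneg hμ.1 ha'
    have h2 : 0 ≤ (1 - μ) * b := mul_nonneg (by linarith [hμ.2]) hb'
    simpa using add_nonneg h1 h2
  -- continuity of g on Icc 0 1
  have hgcont : ContinuousOn g (Icc 0 1) := by
    rw [hg]; apply ContinuousOn.sub
    · exact hf.comp (by fun_prop) hmem
    · fun_prop
  -- midpoint property of g
  have hgmid : ∀ μ ∈ Icc (0:ℝ) 1, ∀ ν ∈ Icc (0:ℝ) 1, g ((μ + ν) / 2) ≤ (g μ + g ν) / 2 := by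
    intro μ hμ ν hν
    have h := hmid _ (hmem μ hμ) _ (hmem ν hν)
    have hpt : ((μ + ν) / 2) * a + (1 - (μ + ν) / 2) * b
        = ((μ * a + (1 - μ) * b) + (ν * a + (1 - ν) * b)) / 2 := by ring
    simp only [hg, hpt]
    linarith
  -- main claim : g ≤ 0 on Icc 0 1
  have hg0 : g 0 = 0 := by simp [hg]
  have hg1 : g 1 = 0 := by simp [hg]
  have hkey : ∀ μ ∈ Icc (0:ℝ) 1, g μ ≤ 0 := by
    obtain ⟨c, hc, hcmax⟩ := isCompact_Icc.exists_isMaxOn (s := Icc (0:ℝ) 1)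
      (nonempty_Icc.2 zero_le_one) hgcont
    set M := g c with hM
    rcases le_or_gt M 0 with hM0 | hM0
    · intro μ hμ; exact le_trans (hcmax hμ) hM0
    · exfalso
      set T : Set ℝ := Icc 0 1 ∩ g ⁻¹' {M} with hT
      have hTclosed : IsClosed T :=
        hgcont.preimage_isClosed_of_isClosed isClosed_Icc isClosed_singleton
      have hTcompact : IsCompact T :=
        isCompact_Icc.of_isClosed_subset hTclosed inter_subset_left
      have hTne : T.Nonempty := ⟨c, hc, rfl⟩
      have hlam0 : sSup T ∈ T := hTcompact.sSup_mem hTne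
      set lam0 := sSup T with hlam0def
      obtain ⟨hlam0mem, hlam0M⟩ := hlam0
      have hglam0 : g lam0 = M := hlam0M
      have hne0 : lam0 ≠ 0 := by intro h; rw [h, hg0] at hglam0; linarith
      have hne1 : lam0 ≠ 1 := by intro h; rw [h, hg1] at hglam0; linarith
      have h0 : 0 < lam0 := lt_of_le_of_ne hlam0mem.1 (Ne.symm hne0)
      have h1 : lam0 < 1 := lt_of_le_of_ne hlam0mem.2 hne1
      set δ := min lam0 (1 - lam0) with hδ
      have hδpos : 0 < δ := lt_min h0 (by linarith)
      have hδ1 : δ ≤ lam0 := min_le_left _ _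
      have hδ2 : δ ≤ 1 - lam0 := min_le_right _ _
      have hνmem : lam0 - δ ∈ Icc (0:ℝ) 1 := ⟨by linarith, by linarith⟩
      have hμmem : lam0 + δ ∈ Icc (0:ℝ) 1 := ⟨by linarith, by linarith⟩
      have hmid2 := hgmid _ hνmem _ hμmem
      have hhalf : ((lam0 - δ) + (lam0 + δ)) / 2 = lam0 := by ring
      rw [hhalf, hglam0] at hmid2
      have hν_le : g (lam0 - δ) ≤ M := hcmax hνmem
      have hμ_le : g (lam0 + δ) ≤ M := hcmax hμmem
      have hμ_eq : g (lam0 + δ) = M := by linarith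
      have : lam0 + δ ≤ lam0 := le_csSup hTcompact.bddAbove ⟨hμmem, hμ_eq⟩
      linarith
  have h2 := hkey wa ⟨hwa, by linarith⟩
  simp only [hg] at h2
  linarith

theorem present_bias_stationarity_iff_logConvex
    (X : Set ℝ) (hXsub : X ⊆ Ici 0) (hX0 : (0:ℝ) ∈ X) (hXconv : Convex ℝ X)
    (hXpos : ∃ x ∈ X, 0 < x)
    (u : ℝ → ℝ) (hucont : ContinuousOn u X) (humono : StrictMonoOn u X)
    (hu0 : u 0 = 0)
    (D : ℝ → ℝ) (hDcont : ContinuousOn D (Ici 0)) (hDanti : StrictAntiOn D (Ici 0))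
    (hDpos : ∀ t ∈ Ici (0:ℝ), 0 < D t) (hDle : ∀ t ∈ Ici (0:ℝ), D t ≤ 1)
    (hD0 : D 0 = 1) (hDlim : Filter.Tendsto D Filter.atTop (nhds 0)) :
    (∀ x ∈ X, ∀ y ∈ X, ∀ σ : ℝ, 0 < σ → ∀ t s : ℝ, 0 ≤ t → t < s →
        D t * u x ≤ D s * u y → D (t + σ) * u x ≤ D (s + σ) * u y) ↔
      ConvexOn ℝ (Ici 0) (fun t => Real.log (D t)) := by
  constructor
  · -- forward direction
    intro H
    -- key multiplicative inequality
    have key : ∀ t s σ : ℝ, 0 ≤ t → t < s → 0 < σ →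
        D (t + σ) * D s ≤ D (s + σ) * D t := by
      intro t s σ ht hts hσ
      obtain ⟨x₀, hx₀X, hx₀pos⟩ := hXpos
      have hs : (0:ℝ) ≤ s := le_of_lt (lt_of_le_of_lt ht hts)
      have hDt : 0 < D t := hDpos t ht
      have hDs : 0 < D s := hDpos s hs
      have hDst : D s < D t := hDanti ht hs hts
      have hux₀ : 0 < u x₀ := by
        rw [← hu0]; exact humono hX0 hx₀X hx₀pos
      set r : ℝ := D s / D t with hr
      have hr0 : 0 < r := div_pos hDs hDt
      have hr1 : r < 1 := (div_lt_one hDt).2 hDst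
      -- find x with u x = r * u x₀
      have hIcc : Icc (0:ℝ) x₀ ⊆ X := hXconv.ordConnected.out hX0 hx₀X
      have hcont' : ContinuousOn u (Icc 0 x₀) := hucont.mono hIcc
      have hival : Icc (u 0) (u x₀) ⊆ u '' Icc 0 x₀ :=
        intermediate_value_Icc (le_of_lt hx₀pos) hcont'
      have hmemI : r * u x₀ ∈ Icc (u 0) (u x₀) := by
        rw [hu0]
        constructor
        · positivity
        · nlinarith
      obtain ⟨x, hxI, hux⟩ := hival hmemI
      have hxX : x ∈ X := hIcc hxI
      have heq : D t * u x = D s * u x₀ := by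
        rw [hux, hr]; field_simp
      have := H x hxX x₀ hx₀X σ hσ t s ht hts (le_of_eq heq)
      rw [hux] at this
      have hDtσ : 0 < D (t + σ) := hDpos _ (by simp only [mem_Ici]; linarith)
      have hDsσ : 0 < D (s + σ) := hDpos _ (by simp only [mem_Ici]; linarith)
      have hrDt : r * D t = D s := by rw [hr]; field_simp
      have h3 : D (t + σ) * D s * u x₀ ≤ D (s + σ) * D t * u x₀ := by
        have h4 := mul_le_mul_of_nonneg_right this (le_of_lt hDt)
        calc D (t + σ) * D s * u x₀ = D (t + σ) * (r * u x₀) * D t := by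
              rw [← hrDt]; ring
          _ ≤ D (s + σ) * u x₀ * D t := h4
          _ = D (s + σ) * D t * u x₀ := by ring
      exact le_of_mul_le_mul_right h3 hux₀
    -- midpoint convexity of log ∘ D
    have hmid : ∀ p ∈ Ici (0:ℝ), ∀ q ∈ Ici (0:ℝ),
        Real.log (D ((p + q) / 2)) ≤ (Real.log (D p) + Real.log (D q)) / 2 := by
      intro p hp q hq
      rcases lt_trichotomy p q with hpq | hpq | hpq
      · have hσ : 0 < (q - p) / 2 := by linarith
        have hk := key p (p + (q - p) / 2) ((q - p) / 2) hp (by linarith) hσ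
        rw [show p + (q - p) / 2 + (q - p) / 2 = q from by ring,
          show p + (q - p) / 2 = (p + q) / 2 from by ring] at hk
        have hm : (0:ℝ) ≤ (p + q) / 2 := by
          have : (0:ℝ) ≤ p := hp; have : (0:ℝ) ≤ q := hq; simp at *; linarith
        have hDm : 0 < D ((p + q) / 2) := hDpos _ hm
        have hDp : 0 < D p := hDpos _ hp
        have hDq : 0 < D q := hDpos _ hq
        have hlog := Real.log_le_log (by positivity) hk
        rw [Real.log_mul (ne_of_gt hDm) (ne_of_gt hDm),
          Real.log_mul (ne_of_gt hDq) (ne_of_gt hDp)] at hlog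
        linarith
      · subst hpq; simp [show (p + p) / 2 = p by ring]
      · have hσ : 0 < (p - q) / 2 := by linarith
        have hk := key q (q + (p - q) / 2) ((p - q) / 2) hq (by linarith) hσ
        rw [show q + (p - q) / 2 + (p - q) / 2 = p from by ring,
          show q + (p - q) / 2 = (p + q) / 2 from by ring] at hk
        have hm : (0:ℝ) ≤ (p + q) / 2 := by
          have : (0:ℝ) ≤ p := hp; have : (0:ℝ) ≤ q := hq; simp at *; linarith
        have hDm : 0 < D ((p + q) / 2) := hDpos _ hm
        have hDp : 0 < D p := hDpos _ hp
        have hDq : 0 < D q := hDpos _ hq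
        have hlog := Real.log_le_log (by positivity) hk
        rw [Real.log_mul (ne_of_gt hDm) (ne_of_gt hDm),
          Real.log_mul (ne_of_gt hDp) (ne_of_gt hDq)] at hlog
        linarith
    have hfcont : ContinuousOn (fun t => Real.log (D t)) (Ici 0) :=
      (Real.continuousOn_log.comp hDcont
        (fun t ht => ne_of_gt (hDpos t ht)))
    exact convexOn_of_midpoint_aux _ hfcont hmid
  · -- backward direction
    intro hconv x hxX y hyX σ hσ t s ht hts h
    have hs : (0:ℝ) ≤ s := le_of_lt (lt_of_le_of_lt ht hts)
    have hDt : 0 < D t := hDpos t ht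
    have hDs : 0 < D s := hDpos s hs
    have hDtσ : 0 < D (t + σ) := hDpos _ (by simp only [mem_Ici]; linarith)
    have hDsσ : 0 < D (s + σ) := hDpos _ (by simp only [mem_Ici]; linarith)
    -- convexity gives the key inequality
    have hkey : D (t + σ) * D s ≤ D t * D (s + σ) := by
      set L : ℝ → ℝ := fun t => Real.log (D t) with hL
      have hden : (0:ℝ) < s + σ - t := by linarith
      set lam : ℝ := σ / (s + σ - t) with hlam
      have hlam0 : 0 < lam := div_pos hσ hden
      have hlam1 : lam < 1 := (div_lt_one hden).2 (by linarith)
      have hmul : lam * (s + σ - t) = σ := div_mul_cancel₀ σ (ne_of_gt hden)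
      have hcomb1 : lam * t + (1 - lam) * (s + σ) = s := by
        field_simp [hlam]; linear_combination (-1:ℝ) * hmul
      have hcomb2 : (1 - lam) * t + lam * (s + σ) = t + σ := by
        field_simp [hlam]; linear_combination hmul
      have h1 := hconv.2 (show t ∈ Ici (0:ℝ) from ht)
        (show s + σ ∈ Ici (0:ℝ) by simp; linarith) (le_of_lt hlam0)
        (by linarith : (0:ℝ) ≤ 1 - lam) (by ring)
      have h2 := hconv.2 (show t ∈ Ici (0:ℝ) from ht)
        (show s + σ ∈ Ici (0:ℝ) by simp; linarith)
        (by linarith : (0:ℝ) ≤ 1 - lam) (le_of_lt hlam0) (by ring)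
      simp only [smul_eq_mul] at h1 h2
      rw [hcomb1] at h1
      rw [hcomb2] at h2
      have hsum : L (t + σ) + L s ≤ L t + L (s + σ) := by
        simp only [hL] at h1 h2 ⊢; linarith
      have := Real.exp_le_exp.2 hsum
      rw [Real.exp_add, Real.exp_add] at this
      simp only [hL, Real.exp_log hDtσ, Real.exp_log hDs, Real.exp_log hDt,
        Real.exp_log hDsσ] at this
      linarith
    have hux : 0 ≤ u x := by
      rcases eq_or_lt_of_le (mem_Ici.mp (hXsub hxX)) with hx0 | hx0
      · rw [← hx0, hu0]
      · rw [← hu0]; exact le_of_lt (humono hX0 hxX hx0)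
    nlinarith [mul_le_mul_of_nonneg_right hkey hux,
      mul_le_mul_of_nonneg_left h (le_of_lt hDsσ)]
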